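/- For every λμ-term t, the composite translation (t†)∘ (first translating λμ to λ̄μμ̃ via (·)†, then back via (·)∘) reduces to t by zero or more linear λμ-reduction steps; the analogous statement holds for λμ-commands and λμ-contexts. -/

import Mathlib

set_option autoImplicit true

namespace CHSim

/-- Lift a de Bruijn renaming under a binder. -/
def upr (ξ : ℕ → ℕ) : ℕ → ℕ
  | 0 => 0
  | k+1 => ξ k + 1

/-! ## The λμ-calculus (de Bruijn representation).

λ-variables and μ-variables each have their own name space of de Bruijn
indices.  `abs t` is `λx.t` (binding λ-index 0) and `mabs c` is `μα.c`
(binding μ-index 0); `cmd a t` is the command `[a]t`. -/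

mutual
  inductive Tm : Type
    | var : ℕ → Tm
    | abs : Tm → Tm
    | app : Tm → Tm → Tm
    | mabs : Cm → Tm
  inductive Cm : Type
    | cmd : ℕ → Tm → Cm
end

/-- λμ-contexts `e ::= ⟨α⟩ | ⟨β⟩(t ·) | e · t`. -/
inductive Ct : Type
  | cvar : ℕ → Ct
  | push : ℕ → Tm → Ct
  | cons : Ct → Tm → Ct

/-- Filling a λμ-context with a term: `⟨α⟩⟨t⟩ = [α]t`,
`(⟨β⟩(u ·))⟨t⟩ = [β](u t)`, `(h · u)⟨t⟩ = h⟨t u⟩`. -/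
def fill : Ct → Tm → Cm
  | .cvar a, t => .cmd a t
  | .push b u, t => .cmd b (.app u t)
  | .cons h u, t => fill h (.app t u)

mutual
  /-- Renaming of λ-variables in λμ-terms. -/
  def renLT (ξ : ℕ → ℕ) : Tm → Tm
    | .var x => .var (ξ x)
    | .abs t => .abs (renLT (upr ξ) t)
    | .app t u => .app (renLT ξ t) (renLT ξ u)
    | .mabs c => .mabs (renLC ξ c)
  /-- Renaming of λ-variables in λμ-commands. -/
  def renLC (ξ : ℕ → ℕ) : Cm → Cm
    | .cmd a t => .cmd a (renLT ξ t)
end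

mutual
  /-- Renaming of μ-variables in λμ-terms. -/
  def renMT (ξ : ℕ → ℕ) : Tm → Tm
    | .var x => .var x
    | .abs t => .abs (renMT ξ t)
    | .app t u => .app (renMT ξ t) (renMT ξ u)
    | .mabs c => .mabs (renMC (upr ξ) c)
  /-- Renaming of μ-variables in λμ-commands. -/
  def renMC (ξ : ℕ → ℕ) : Cm → Cm
    | .cmd a t => .cmd (ξ a) (renMT ξ t)
end

/-- Renaming of λ-variables in λμ-contexts. -/
def renLE (ξ : ℕ → ℕ) : Ct → Ct
  | .cvar a => .cvar a
  | .push b t => .push b (renLT ξ t)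
  | .cons e t => .cons (renLE ξ e) (renLT ξ t)

/-- Renaming of μ-variables in λμ-contexts. -/
def renME (ξ : ℕ → ℕ) : Ct → Ct
  | .cvar a => .cvar (ξ a)
  | .push b t => .push (ξ b) (renMT ξ t)
  | .cons e t => .cons (renME ξ e) (renMT ξ t)

/-- Lifting a λ-substitution under a λ-binder. -/
def upsL (σ : ℕ → Tm) : ℕ → Tm
  | 0 => .var 0
  | k+1 => renLT Nat.succ (σ k)

mutual
  /-- (Capture-avoiding) substitution for λ-variables in λμ-terms. -/
  def lsubT (σ : ℕ → Tm) : Tm → Tm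
    | .var x => σ x
    | .abs t => .abs (lsubT (upsL σ) t)
    | .app t u => .app (lsubT σ t) (lsubT σ u)
    | .mabs c => .mabs (lsubC (fun k => renMT Nat.succ (σ k)) c)
  /-- Substitution for λ-variables in λμ-commands. -/
  def lsubC (σ : ℕ → Tm) : Cm → Cm
    | .cmd a t => .cmd a (lsubT σ t)
end

/-- Substitution for λ-variables in λμ-contexts. -/
def lsubE (σ : ℕ → Tm) : Ct → Ct
  | .cvar a => .cvar a
  | .push b t => .push b (lsubT σ t)
  | .cons e t => .cons (lsubE σ e) (lsubT σ t)

/-- The substitution replacing the λ-variable `x` by `u`. -/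
def sub1L (x : ℕ) (u : Tm) : ℕ → Tm := fun k => if k = x then u else .var k

/-- The β-substitution replacing the bound λ-variable 0 by `u`. -/
def sub0L (u : Tm) : ℕ → Tm
  | 0 => u
  | k+1 => .var k

/-- Lifting a structural (μ-)substitution under a μ-binder. -/
def upsM (σ : ℕ → Ct) : ℕ → Ct
  | 0 => .cvar 0
  | k+1 => renME Nat.succ (σ k)

mutual
  /-- Structural substitution of λμ-contexts for μ-variables in λμ-terms:
  every subcommand `[α]u` is replaced by `(σ α)⟨u[σ]⟩`. -/
  def msubT (σ : ℕ → Ct) : Tm → Tm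
    | .var x => .var x
    | .abs t => .abs (msubT (fun k => renLE Nat.succ (σ k)) t)
    | .app t u => .app (msubT σ t) (msubT σ u)
    | .mabs c => .mabs (msubC (upsM σ) c)
  /-- Structural substitution in λμ-commands. -/
  def msubC (σ : ℕ → Ct) : Cm → Cm
    | .cmd a t => fill (σ a) (msubT σ t)
end

/-- Structural substitution in λμ-contexts (the head variable of
`⟨β⟩(t ·)` is, by the freshness convention of the translations,
never the substituted variable, so it is left untouched). -/
def msubE (σ : ℕ → Ct) : Ct → Ct
  | .cvar a => σ a
  | .push b t => .push b (msubT σ t)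
  | .cons e t => .cons (msubE σ e) (msubT σ t)

/-- The structural substitution replacing the μ-variable `a` by the context `e`. -/
def sub1M (a : ℕ) (e : Ct) : ℕ → Ct := fun k => if k = a then e else .cvar k

/-- The structural substitution replacing the bound μ-variable 0 by the
context `e` (removing the binder). -/
def sub0M (e : Ct) : ℕ → Ct
  | 0 => e
  | k+1 => .cvar k

mutual
  /-- Number of free occurrences of the λ-variable `x` in a λμ-term. -/
  def cntLT (x : ℕ) : Tm → ℕ
    | .var y => if y = x then 1 else 0
    | .abs t => cntLT (x+1) t
    | .app t u => cntLT x t + cntLT x u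
    | .mabs c => cntLC x c
  /-- Number of free occurrences of the λ-variable `x` in a λμ-command. -/
  def cntLC (x : ℕ) : Cm → ℕ
    | .cmd _ t => cntLT x t
end

/-- λμ-values `v ::= x | λx.t`. -/
inductive IsVal : Tm → Prop
  | var (x : ℕ) : IsVal (.var x)
  | abs (t : Tm) : IsVal (.abs t)

/-! ### Reduction in λμ: congruence closure of root rules -/

mutual
  /-- Congruence (compatible) closure of root relations, term level. -/
  inductive KT (R1 : Tm → Tm → Prop) (R2 : Cm → Cm → Prop) : Tm → Tm → Prop
    | root {t t'} : R1 t t' → KT R1 R2 t t'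
    | absC {t t'} : KT R1 R2 t t' → KT R1 R2 (.abs t) (.abs t')
    | appL {t t'} (u) : KT R1 R2 t t' → KT R1 R2 (.app t u) (.app t' u)
    | appR (t) {u u'} : KT R1 R2 u u' → KT R1 R2 (.app t u) (.app t u')
    | mabsC {c c'} : KC R1 R2 c c' → KT R1 R2 (.mabs c) (.mabs c')
  /-- Congruence (compatible) closure of root relations, command level. -/
  inductive KC (R1 : Tm → Tm → Prop) (R2 : Cm → Cm → Prop) : Cm → Cm → Prop
    | root {c c'} : R2 c c' → KC R1 R2 c c'
    | cmdC (a) {t t'} : KT R1 R2 t t' → KC R1 R2 (.cmd a t) (.cmd a t')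
end

/-- Term-level root rules of the undirected λμ-calculus: β, μ, μ', θ. -/
inductive RootT : Tm → Tm → Prop
  | beta (u t : Tm) : RootT (.app (.abs u) t) (lsubT (sub0L t) u)
  | mu (c : Cm) (t : Tm) : RootT (.app (.mabs c) t)
      (.mabs (msubC (sub1M 0 (.cons (.cvar 0) (renMT Nat.succ t))) c))
  | mu' (t : Tm) (c : Cm) : RootT (.app t (.mabs c))
      (.mabs (msubC (sub1M 0 (.push 0 (renMT Nat.succ t))) c))
  | theta (t : Tm) : RootT (.mabs (.cmd 0 (renMT Nat.succ t))) t

/-- Command-level root rule of the λμ-calculus: ρ. -/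
inductive RootC : Cm → Cm → Prop
  | rho (b : ℕ) (c : Cm) : RootC (.cmd b (.mabs c)) (msubC (sub0M (.cvar b)) c)

/-- Term-level *linear* root rules of the λμ-calculus: θ, and β when the
argument is a variable or the bound variable occurs exactly once. -/
inductive RootTlin : Tm → Tm → Prop
  | beta (u t : Tm) : ((∃ y, t = Tm.var y) ∨ cntLT 0 u = 1) →
      RootTlin (.app (.abs u) t) (lsubT (sub0L t) u)
  | theta (t : Tm) : RootTlin (.mabs (.cmd 0 (renMT Nat.succ t))) t

/-- Term-level root rules of call-by-name λμ: β, μ, θ (no μ'). -/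
inductive RootTn : Tm → Tm → Prop
  | beta (u t : Tm) : RootTn (.app (.abs u) t) (lsubT (sub0L t) u)
  | mu (c : Cm) (t : Tm) : RootTn (.app (.mabs c) t)
      (.mabs (msubC (sub1M 0 (.cons (.cvar 0) (renMT Nat.succ t))) c))
  | theta (t : Tm) : RootTn (.mabs (.cmd 0 (renMT Nat.succ t))) t

/-- Term-level root rules of call-by-value λμ: βv, μv, μ', θ. -/
inductive RootTv : Tm → Tm → Prop
  | betav (u t : Tm) : IsVal t → RootTv (.app (.abs u) t) (lsubT (sub0L t) u)
  | muv (c : Cm) (t : Tm) : IsVal t → RootTv (.app (.mabs c) t)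
      (.mabs (msubC (sub1M 0 (.cons (.cvar 0) (renMT Nat.succ t))) c))
  | mu' (t : Tm) (c : Cm) : RootTv (.app t (.mabs c))
      (.mabs (msubC (sub1M 0 (.push 0 (renMT Nat.succ t))) c))
  | theta (t : Tm) : RootTv (.mabs (.cmd 0 (renMT Nat.succ t))) t

/-- Term-level *linear call-by-value* root rules of λμ. -/
inductive RootTvlin : Tm → Tm → Prop
  | betav (u t : Tm) : IsVal t → ((∃ y, t = Tm.var y) ∨ cntLT 0 u = 1) →
      RootTvlin (.app (.abs u) t) (lsubT (sub0L t) u)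
  | theta (t : Tm) : RootTvlin (.mabs (.cmd 0 (renMT Nat.succ t))) t

/-- One-step λμ-reduction (β, μ, μ', ρ, θ), terms. -/
abbrev StepT := KT RootT RootC
/-- One-step λμ-reduction (β, μ, μ', ρ, θ), commands. -/
abbrev StepC := KC RootT RootC
/-- One-step linear λμ-reduction, terms. -/
abbrev LStepT := KT RootTlin RootC
/-- One-step linear λμ-reduction, commands. -/
abbrev LStepC := KC RootTlin RootC
/-- One-step call-by-name λμ-reduction, terms. -/
abbrev StepNT := KT RootTn RootC
/-- One-step call-by-name λμ-reduction, commands. -/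
abbrev StepNC := KC RootTn RootC
/-- One-step call-by-value λμ-reduction, terms. -/
abbrev StepVT := KT RootTv RootC
/-- One-step call-by-value λμ-reduction, commands. -/
abbrev StepVC := KC RootTv RootC
/-- One-step linear call-by-value λμ-reduction, terms. -/
abbrev LStepVT := KT RootTvlin RootC
/-- One-step linear call-by-value λμ-reduction, commands. -/
abbrev LStepVC := KC RootTvlin RootC

/-- Reflexive-transitive closure. -/
abbrev Star {α : Type} (r : α → α → Prop) : α → α → Prop := Relation.ReflTransGen r

/-! ## The λ̄μμ̃-calculus (de Bruijn representation). -/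

mutual
  inductive BTm : Type
    | var : ℕ → BTm
    | abs : BTm → BTm
    | mabs : BCm → BTm
  inductive BCm : Type
    | cut : BTm → BCt → BCm
  inductive BCt : Type
    | cvar : ℕ → BCt
    | cons : BTm → BCt → BCt
    | tmu : BCm → BCt
end

mutual
  /-- Renaming of λ-variables in λ̄μμ̃-terms. -/
  def brenLT (ξ : ℕ → ℕ) : BTm → BTm
    | .var x => .var (ξ x)
    | .abs t => .abs (brenLT (upr ξ) t)
    | .mabs c => .mabs (brenLC ξ c)
  def brenLC (ξ : ℕ → ℕ) : BCm → BCm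
    | .cut t e => .cut (brenLT ξ t) (brenLE ξ e)
  def brenLE (ξ : ℕ → ℕ) : BCt → BCt
    | .cvar a => .cvar a
    | .cons t e => .cons (brenLT ξ t) (brenLE ξ e)
    | .tmu c => .tmu (brenLC (upr ξ) c)
end

mutual
  /-- Renaming of μ-variables in λ̄μμ̃-terms. -/
  def brenMT (ξ : ℕ → ℕ) : BTm → BTm
    | .var x => .var x
    | .abs t => .abs (brenMT ξ t)
    | .mabs c => .mabs (brenMC (upr ξ) c)
  def brenMC (ξ : ℕ → ℕ) : BCm → BCm
    | .cut t e => .cut (brenMT ξ t) (brenME ξ e)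
  def brenME (ξ : ℕ → ℕ) : BCt → BCt
    | .cvar a => .cvar (ξ a)
    | .cons t e => .cons (brenMT ξ t) (brenME ξ e)
    | .tmu c => .tmu (brenMC ξ c)
end

def bupsL (σ : ℕ → BTm) : ℕ → BTm
  | 0 => .var 0
  | k+1 => brenLT Nat.succ (σ k)

mutual
  /-- Substitution for λ-variables in λ̄μμ̃-terms. -/
  def blsubT (σ : ℕ → BTm) : BTm → BTm
    | .var x => σ x
    | .abs t => .abs (blsubT (bupsL σ) t)
    | .mabs c => .mabs (blsubC (fun k => brenMT Nat.succ (σ k)) c)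
  def blsubC (σ : ℕ → BTm) : BCm → BCm
    | .cut t e => .cut (blsubT σ t) (blsubE σ e)
  def blsubE (σ : ℕ → BTm) : BCt → BCt
    | .cvar a => .cvar a
    | .cons t e => .cons (blsubT σ t) (blsubE σ e)
    | .tmu c => .tmu (blsubC (bupsL σ) c)
end

def bsub1L (x : ℕ) (u : BTm) : ℕ → BTm := fun k => if k = x then u else .var k

def bsub0L (u : BTm) : ℕ → BTm
  | 0 => u
  | k+1 => .var k

def bupsM (σ : ℕ → BCt) : ℕ → BCt
  | 0 => .cvar 0
  | k+1 => brenME Nat.succ (σ k)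

mutual
  /-- Structural substitution of contexts for μ-variables in λ̄μμ̃-terms. -/
  def bmsubT (σ : ℕ → BCt) : BTm → BTm
    | .var x => .var x
    | .abs t => .abs (bmsubT (fun k => brenLE Nat.succ (σ k)) t)
    | .mabs c => .mabs (bmsubC (bupsM σ) c)
  def bmsubC (σ : ℕ → BCt) : BCm → BCm
    | .cut t e => .cut (bmsubT σ t) (bmsubE σ e)
  def bmsubE (σ : ℕ → BCt) : BCt → BCt
    | .cvar a => σ a
    | .cons t e => .cons (bmsubT σ t) (bmsubE σ e)
    | .tmu c => .tmu (bmsubC (fun k => brenLE Nat.succ (σ k)) c)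
end

def bsub1M (a : ℕ) (e : BCt) : ℕ → BCt := fun k => if k = a then e else .cvar k

def bsub0M (e : BCt) : ℕ → BCt
  | 0 => e
  | k+1 => .cvar k

mutual
  /-- Number of free occurrences of the λ-variable `x` in a λ̄μμ̃-term. -/
  def bcntLT (x : ℕ) : BTm → ℕ
    | .var y => if y = x then 1 else 0
    | .abs t => bcntLT (x+1) t
    | .mabs c => bcntLC x c
  def bcntLC (x : ℕ) : BCm → ℕ
    | .cut t e => bcntLT x t + bcntLE x e
  def bcntLE (x : ℕ) : BCt → ℕ
    | .cvar _ => 0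
    | .cons t e => bcntLT x t + bcntLE x e
    | .tmu c => bcntLC (x+1) c
end

mutual
  /-- Number of free occurrences of the μ-variable `a` in a λ̄μμ̃-term. -/
  def bcntMT (a : ℕ) : BTm → ℕ
    | .var _ => 0
    | .abs t => bcntMT a t
    | .mabs c => bcntMC (a+1) c
  def bcntMC (a : ℕ) : BCm → ℕ
    | .cut t e => bcntMT a t + bcntME a e
  def bcntME (a : ℕ) : BCt → ℕ
    | .cvar b => if b = a then 1 else 0
    | .cons t e => bcntMT a t + bcntME a e
    | .tmu c => bcntMC a c
end

/-- λ̄μμ̃-values `v ::= x | λx.t`. -/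
inductive BIsVal : BTm → Prop
  | var (x : ℕ) : BIsVal (.var x)
  | abs (t : BTm) : BIsVal (.abs t)

/-- Stacks (the contexts of λ̄μμ̃_T): `s ::= α | t · s`. -/
inductive IsStk : BCt → Prop
  | cvar (a : ℕ) : IsStk (.cvar a)
  | cons (t : BTm) {s : BCt} : IsStk s → IsStk (.cons t s)

/-! ### Reduction in λ̄μμ̃: congruence closure of root rules -/

mutual
  inductive JT (R1 : BTm → BTm → Prop) (R2 : BCm → BCm → Prop) : BTm → BTm → Prop
    | root {t t'} : R1 t t' → JT R1 R2 t t'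
    | absC {t t'} : JT R1 R2 t t' → JT R1 R2 (.abs t) (.abs t')
    | mabsC {c c'} : JC R1 R2 c c' → JT R1 R2 (.mabs c) (.mabs c')
  inductive JC (R1 : BTm → BTm → Prop) (R2 : BCm → BCm → Prop) : BCm → BCm → Prop
    | root {c c'} : R2 c c' → JC R1 R2 c c'
    | cutL {t t'} (e) : JT R1 R2 t t' → JC R1 R2 (.cut t e) (.cut t' e)
    | cutR (t) {e e'} : JE R1 R2 e e' → JC R1 R2 (.cut t e) (.cut t e')
  inductive JE (R1 : BTm → BTm → Prop) (R2 : BCm → BCm → Prop) : BCt → BCt → Prop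
    | consL {t t'} (e) : JT R1 R2 t t' → JE R1 R2 (.cons t e) (.cons t' e)
    | consR (t) {e e'} : JE R1 R2 e e' → JE R1 R2 (.cons t e) (.cons t e')
    | tmuC {c c'} : JC R1 R2 c c' → JE R1 R2 (.tmu c) (.tmu c')
end

/-- The term-level root rule of λ̄μμ̃: θ (shared by all evaluation disciplines). -/
inductive BRootT : BTm → BTm → Prop
  | theta (t : BTm) : BRootT (.mabs (.cut (brenMT Nat.succ t) (.cvar 0))) t

/-- Command-level root rules of the undirected λ̄μμ̃-calculus: β, μ, μ̃. -/
inductive BRootC : BCm → BCm → Prop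
  | beta (u t : BTm) (e : BCt) :
      BRootC (.cut (.abs u) (.cons t e)) (.cut t (.tmu (.cut u (brenLE Nat.succ e))))
  | mu (c : BCm) (e : BCt) : BRootC (.cut (.mabs c) e) (bmsubC (bsub0M e) c)
  | mutilde (t : BTm) (c : BCm) : BRootC (.cut t (.tmu c)) (blsubC (bsub0L t) c)

/-- Command-level *linear* root rules of λ̄μμ̃: β always; μ (resp. μ̃) when the
substituted context (resp. term) is a variable or the bound variable occurs
exactly once in the command. -/
inductive BRootClin : BCm → BCm → Prop
  | beta (u t : BTm) (e : BCt) :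
      BRootClin (.cut (.abs u) (.cons t e)) (.cut t (.tmu (.cut u (brenLE Nat.succ e))))
  | mu (c : BCm) (e : BCt) : ((∃ a, e = BCt.cvar a) ∨ bcntMC 0 c = 1) →
      BRootClin (.cut (.mabs c) e) (bmsubC (bsub0M e) c)
  | mutilde (t : BTm) (c : BCm) : ((∃ x, t = BTm.var x) ∨ bcntLC 0 c = 1) →
      BRootClin (.cut t (.tmu c)) (blsubC (bsub0L t) c)

/-- Command-level root rules of call-by-name λ̄μμ̃ (λ̄μμ̃_T): β, μₙ (stacks), μ̃. -/
inductive BRootCn : BCm → BCm → Prop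
  | beta (u t : BTm) (e : BCt) :
      BRootCn (.cut (.abs u) (.cons t e)) (.cut t (.tmu (.cut u (brenLE Nat.succ e))))
  | mun (c : BCm) (s : BCt) : IsStk s → BRootCn (.cut (.mabs c) s) (bmsubC (bsub0M s) c)
  | mutilde (t : BTm) (c : BCm) : BRootCn (.cut t (.tmu c)) (blsubC (bsub0L t) c)

/-- Command-level *linear call-by-name* root rules of λ̄μμ̃. -/
inductive BRootCnlin : BCm → BCm → Prop
  | beta (u t : BTm) (e : BCt) :
      BRootCnlin (.cut (.abs u) (.cons t e)) (.cut t (.tmu (.cut u (brenLE Nat.succ e))))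
  | mun (c : BCm) (s : BCt) : IsStk s → ((∃ a, s = BCt.cvar a) ∨ bcntMC 0 c = 1) →
      BRootCnlin (.cut (.mabs c) s) (bmsubC (bsub0M s) c)
  | mutilde (t : BTm) (c : BCm) : ((∃ x, t = BTm.var x) ∨ bcntLC 0 c = 1) →
      BRootCnlin (.cut t (.tmu c)) (blsubC (bsub0L t) c)

/-- Command-level root rules of call-by-value λ̄μμ̃ (λ̄μμ̃_Q): β, μ, μ̃ᵥ (values). -/
inductive BRootCv : BCm → BCm → Prop
  | beta (u t : BTm) (e : BCt) :
      BRootCv (.cut (.abs u) (.cons t e)) (.cut t (.tmu (.cut u (brenLE Nat.succ e))))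
  | mu (c : BCm) (e : BCt) : BRootCv (.cut (.mabs c) e) (bmsubC (bsub0M e) c)
  | mutildev (v : BTm) (c : BCm) : BIsVal v →
      BRootCv (.cut v (.tmu c)) (blsubC (bsub0L v) c)

/-- Command-level *linear call-by-value* root rules of λ̄μμ̃. -/
inductive BRootCvlin : BCm → BCm → Prop
  | beta (u t : BTm) (e : BCt) :
      BRootCvlin (.cut (.abs u) (.cons t e)) (.cut t (.tmu (.cut u (brenLE Nat.succ e))))
  | mu (c : BCm) (e : BCt) : ((∃ a, e = BCt.cvar a) ∨ bcntMC 0 c = 1) →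
      BRootCvlin (.cut (.mabs c) e) (bmsubC (bsub0M e) c)
  | mutildev (v : BTm) (c : BCm) : BIsVal v → ((∃ x, v = BTm.var x) ∨ bcntLC 0 c = 1) →
      BRootCvlin (.cut v (.tmu c)) (blsubC (bsub0L v) c)

/-- Command-level root rules with β' instead of β: β', μ, μ̃. -/
inductive BRootCp : BCm → BCm → Prop
  | beta' (u t : BTm) (e : BCt) :
      BRootCp (.cut (.abs u) (.cons t e)) (.cut (blsubT (bsub0L t) u) e)
  | mu (c : BCm) (e : BCt) : BRootCp (.cut (.mabs c) e) (bmsubC (bsub0M e) c)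
  | mutilde (t : BTm) (c : BCm) : BRootCp (.cut t (.tmu c)) (blsubC (bsub0L t) c)

/-- Command-level call-by-name root rules with β': β', μₙ, μ̃. -/
inductive BRootCnp : BCm → BCm → Prop
  | beta' (u t : BTm) (e : BCt) :
      BRootCnp (.cut (.abs u) (.cons t e)) (.cut (blsubT (bsub0L t) u) e)
  | mun (c : BCm) (s : BCt) : IsStk s → BRootCnp (.cut (.mabs c) s) (bmsubC (bsub0M s) c)
  | mutilde (t : BTm) (c : BCm) : BRootCnp (.cut t (.tmu c)) (blsubC (bsub0L t) c)

/-- Command-level call-by-value root rules with β': β' (values), μ, μ̃ᵥ. -/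
inductive BRootCvp : BCm → BCm → Prop
  | beta' (u v : BTm) (e : BCt) : BIsVal v →
      BRootCvp (.cut (.abs u) (.cons v e)) (.cut (blsubT (bsub0L v) u) e)
  | mu (c : BCm) (e : BCt) : BRootCvp (.cut (.mabs c) e) (bmsubC (bsub0M e) c)
  | mutildev (v : BTm) (c : BCm) : BIsVal v →
      BRootCvp (.cut v (.tmu c)) (blsubC (bsub0L v) c)

/-- One-step λ̄μμ̃-reduction (β, μ, μ̃, θ), terms. -/
abbrev BStepT := JT BRootT BRootC
abbrev BStepC := JC BRootT BRootC
abbrev BStepE := JE BRootT BRootC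
/-- One-step linear λ̄μμ̃-reduction. -/
abbrev LBStepT := JT BRootT BRootClin
abbrev LBStepC := JC BRootT BRootClin
abbrev LBStepE := JE BRootT BRootClin
/-- One-step call-by-name λ̄μμ̃-reduction. -/
abbrev BStepNT := JT BRootT BRootCn
abbrev BStepNC := JC BRootT BRootCn
abbrev BStepNE := JE BRootT BRootCn
/-- One-step linear call-by-name λ̄μμ̃-reduction. -/
abbrev LBStepNT := JT BRootT BRootCnlin
abbrev LBStepNC := JC BRootT BRootCnlin
/-- One-step call-by-value λ̄μμ̃-reduction. -/
abbrev BStepVT := JT BRootT BRootCv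
abbrev BStepVC := JC BRootT BRootCv
/-- One-step linear call-by-value λ̄μμ̃-reduction. -/
abbrev LBStepVT := JT BRootT BRootCvlin
abbrev LBStepVC := JC BRootT BRootCvlin
/-- One-step λ̄μμ̃-reduction with β' (β', μ, μ̃, θ). -/
abbrev BStepPT := JT BRootT BRootCp
abbrev BStepPC := JC BRootT BRootCp
/-- One-step call-by-name λ̄μμ̃-reduction with β'. -/
abbrev BStepNPT := JT BRootT BRootCnp
abbrev BStepNPC := JC BRootT BRootCnp
/-- One-step call-by-value λ̄μμ̃-reduction with β'. -/
abbrev BStepVPT := JT BRootT BRootCvp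
abbrev BStepVPC := JC BRootT BRootCvp

/-! ## The translation `(·)†` from λμ to λ̄μμ̃ -/

mutual
  /-- `x† = x`, `(λx.u)† = λx.u†`, `(u v)† = μβ.⟨v† | μ̃y.⟨u† | y·β⟩⟩`
  (`y`, `β` fresh, realized by de Bruijn lifting), `(μα.c)† = μα.c†`. -/
  def dagT : Tm → BTm
    | .var x => .var x
    | .abs t => .abs (dagT t)
    | .app u v => .mabs (.cut (brenMT Nat.succ (dagT v))
        (.tmu (.cut (brenLT Nat.succ (brenMT Nat.succ (dagT u)))
          (.cons (.var 0) (.cvar 0)))))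
    | .mabs c => .mabs (dagC c)
  /-- `([α]t)† = ⟨t† | α⟩`. -/
  def dagC : Cm → BCm
    | .cmd a t => .cut (dagT t) (.cvar a)
end

/-- `⟨α⟩† = α`, `(⟨β⟩(t ·))† = μ̃y.⟨t† | y·β⟩`, `(h · t)† = t† · h†`. -/
def dagE : Ct → BCt
  | .cvar a => .cvar a
  | .push b t => .tmu (.cut (brenLT Nat.succ (dagT t)) (.cons (.var 0) (.cvar b)))
  | .cons e t => .cons (dagT t) (dagE e)

/-! ## The translation `(·)∘` from λ̄μμ̃ to λμ -/

mutual
  /-- `x∘ = x`, `(λx.u)∘ = λx.u∘`, `(μα.c)∘ = μα.c∘`. -/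
  def circT : BTm → Tm
    | .var x => .var x
    | .abs t => .abs (circT t)
    | .mabs c => .mabs (circC c)
  /-- `⟨t | e⟩∘ = e∘⟨t∘⟩`. -/
  def circC : BCm → Cm
    | .cut t e => fill (circE e) (circT t)
  /-- `α∘ = ⟨α⟩`, `(t · h)∘ = h∘ · t∘`,
  `(μ̃x.c)∘ = ⟨β⟩((λx.μδ.c∘) ·)` with `δ ∉ c` (realized by lifting). -/
  def circE : BCt → Ct
    | .cvar a => .cvar a
    | .cons t e => .cons (circE e) (circT t)
    | .tmu c => .push 0 (.abs (.mabs (renMC Nat.succ (circC c))))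
end

-- ## Auxiliary lemmas

theorem upr_comp (ξ ζ : ℕ → ℕ) : (fun k => upr ξ (upr ζ k)) = upr (fun k => ξ (ζ k)) := by
  funext n; cases n <;> simp [upr]

theorem upr_id : (upr (fun k => k)) = fun k => k := by
  funext n; cases n <;> simp [upr]

mutual
theorem renLT_comp (ξ ζ : ℕ → ℕ) : ∀ t : Tm,
    renLT ξ (renLT ζ t) = renLT (fun k => ξ (ζ k)) t
  | .var x => rfl
  | .abs t => by simp [renLT, renLT_comp (upr ξ) (upr ζ) t, upr_comp]
  | .app t u => by simp [renLT, renLT_comp ξ ζ t, renLT_comp ξ ζ u]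
  | .mabs c => by simp [renLT, renLC, renLC_comp ξ ζ c]
theorem renLC_comp (ξ ζ : ℕ → ℕ) : ∀ c : Cm,
    renLC ξ (renLC ζ c) = renLC (fun k => ξ (ζ k)) c
  | .cmd a t => by simp [renLC, renLT_comp ξ ζ t]
end

mutual
theorem renMT_comp (ξ ζ : ℕ → ℕ) : ∀ t : Tm,
    renMT ξ (renMT ζ t) = renMT (fun k => ξ (ζ k)) t
  | .var x => rfl
  | .abs t => by simp [renMT, renMT_comp ξ ζ t]
  | .app t u => by simp [renMT, renMT_comp ξ ζ t, renMT_comp ξ ζ u]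
  | .mabs c => by simp [renMT, renMC_comp (upr ξ) (upr ζ) c, upr_comp]
theorem renMC_comp (ξ ζ : ℕ → ℕ) : ∀ c : Cm,
    renMC ξ (renMC ζ c) = renMC (fun k => ξ (ζ k)) c
  | .cmd a t => by simp [renMC, renMT_comp ξ ζ t]
end

mutual
theorem renMT_renLT (ξ ζ : ℕ → ℕ) : ∀ t : Tm,
    renMT ξ (renLT ζ t) = renLT ζ (renMT ξ t)
  | .var x => rfl
  | .abs t => by simp [renMT, renLT, renMT_renLT ξ (upr ζ) t]
  | .app t u => by simp [renMT, renLT, renMT_renLT ξ ζ t, renMT_renLT ξ ζ u]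
  | .mabs c => by simp [renMT, renLT, renMC_renLC (upr ξ) ζ c]
theorem renMC_renLC (ξ ζ : ℕ → ℕ) : ∀ c : Cm,
    renMC ξ (renLC ζ c) = renLC ζ (renMC ξ c)
  | .cmd a t => by simp [renMC, renLC, renMT_renLT ξ ζ t]
end

mutual
theorem renLT_id : ∀ t : Tm, renLT (fun k => k) t = t
  | .var x => rfl
  | .abs t => by simp [renLT, upr_id, renLT_id t]
  | .app t u => by simp [renLT, renLT_id t, renLT_id u]
  | .mabs c => by simp [renLT, renLC_id c]
theorem renLC_id : ∀ c : Cm, renLC (fun k => k) c = c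
  | .cmd a t => by simp [renLC, renLT_id t]
end

mutual
theorem renMT_id : ∀ t : Tm, renMT (fun k => k) t = t
  | .var x => rfl
  | .abs t => by simp [renMT, renMT_id t]
  | .app t u => by simp [renMT, renMT_id t, renMT_id u]
  | .mabs c => by simp [renMT, upr_id, renMC_id c]
theorem renMC_id : ∀ c : Cm, renMC (fun k => k) c = c
  | .cmd a t => by simp [renMC, renMT_id t]
end

mutual
theorem brenLT_comp (ξ ζ : ℕ → ℕ) : ∀ t : BTm,
    brenLT ξ (brenLT ζ t) = brenLT (fun k => ξ (ζ k)) t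
  | .var x => rfl
  | .abs t => by simp [brenLT, brenLT_comp (upr ξ) (upr ζ) t, upr_comp]
  | .mabs c => by simp [brenLT, brenLC_comp ξ ζ c]
theorem brenLC_comp (ξ ζ : ℕ → ℕ) : ∀ c : BCm,
    brenLC ξ (brenLC ζ c) = brenLC (fun k => ξ (ζ k)) c
  | .cut t e => by simp [brenLC, brenLT_comp ξ ζ t, brenLE_comp ξ ζ e]
theorem brenLE_comp (ξ ζ : ℕ → ℕ) : ∀ e : BCt,
    brenLE ξ (brenLE ζ e) = brenLE (fun k => ξ (ζ k)) e
  | .cvar a => rfl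
  | .cons t e => by simp [brenLE, brenLT_comp ξ ζ t, brenLE_comp ξ ζ e]
  | .tmu c => by simp [brenLE, brenLC_comp (upr ξ) (upr ζ) c, upr_comp]
end

mutual
theorem brenMT_comp (ξ ζ : ℕ → ℕ) : ∀ t : BTm,
    brenMT ξ (brenMT ζ t) = brenMT (fun k => ξ (ζ k)) t
  | .var x => rfl
  | .abs t => by simp [brenMT, brenMT_comp ξ ζ t]
  | .mabs c => by simp [brenMT, brenMC_comp (upr ξ) (upr ζ) c, upr_comp]
theorem brenMC_comp (ξ ζ : ℕ → ℕ) : ∀ c : BCm,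
    brenMC ξ (brenMC ζ c) = brenMC (fun k => ξ (ζ k)) c
  | .cut t e => by simp [brenMC, brenMT_comp ξ ζ t, brenME_comp ξ ζ e]
theorem brenME_comp (ξ ζ : ℕ → ℕ) : ∀ e : BCt,
    brenME ξ (brenME ζ e) = brenME (fun k => ξ (ζ k)) e
  | .cvar a => rfl
  | .cons t e => by simp [brenME, brenMT_comp ξ ζ t, brenME_comp ξ ζ e]
  | .tmu c => by simp [brenME, brenMC_comp ξ ζ c]
end

mutual
theorem brenMT_brenLT (ξ ζ : ℕ → ℕ) : ∀ t : BTm,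
    brenMT ξ (brenLT ζ t) = brenLT ζ (brenMT ξ t)
  | .var x => rfl
  | .abs t => by simp [brenMT, brenLT, brenMT_brenLT ξ (upr ζ) t]
  | .mabs c => by simp [brenMT, brenLT, brenMC_brenLC (upr ξ) ζ c]
theorem brenMC_brenLC (ξ ζ : ℕ → ℕ) : ∀ c : BCm,
    brenMC ξ (brenLC ζ c) = brenLC ζ (brenMC ξ c)
  | .cut t e => by simp [brenMC, brenLC, brenMT_brenLT ξ ζ t, brenME_brenLE ξ ζ e]
theorem brenME_brenLE (ξ ζ : ℕ → ℕ) : ∀ e : BCt,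
    brenME ξ (brenLE ζ e) = brenLE ζ (brenME ξ e)
  | .cvar a => rfl
  | .cons t e => by simp [brenME, brenLE, brenMT_brenLT ξ ζ t, brenME_brenLE ξ ζ e]
  | .tmu c => by simp [brenME, brenLE, brenMC_brenLC ξ (upr ζ) c]
end

mutual
theorem brenLT_id : ∀ t : BTm, brenLT (fun k => k) t = t
  | .var x => rfl
  | .abs t => by simp [brenLT, upr_id, brenLT_id t]
  | .mabs c => by simp [brenLT, brenLC_id c]
theorem brenLC_id : ∀ c : BCm, brenLC (fun k => k) c = c
  | .cut t e => by simp [brenLC, brenLT_id t, brenLE_id e]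
theorem brenLE_id : ∀ e : BCt, brenLE (fun k => k) e = e
  | .cvar a => rfl
  | .cons t e => by simp [brenLE, brenLT_id t, brenLE_id e]
  | .tmu c => by simp [brenLE, upr_id, brenLC_id c]
end

mutual
theorem brenMT_id : ∀ t : BTm, brenMT (fun k => k) t = t
  | .var x => rfl
  | .abs t => by simp [brenMT, brenMT_id t]
  | .mabs c => by simp [brenMT, upr_id, brenMC_id c]
theorem brenMC_id : ∀ c : BCm, brenMC (fun k => k) c = c
  | .cut t e => by simp [brenMC, brenMT_id t, brenME_id e]
theorem brenME_id : ∀ e : BCt, brenME (fun k => k) e = e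
  | .cvar a => rfl
  | .cons t e => by simp [brenME, brenMT_id t, brenME_id e]
  | .tmu c => by simp [brenME, brenMC_id c]
end

theorem upsL_upr (σ : ℕ → Tm) (ξ : ℕ → ℕ) :
    (fun k => upsL σ (upr ξ k)) = upsL (fun k => σ (ξ k)) := by
  funext n; cases n <;> simp [upsL, upr]

mutual
theorem lsubT_ren (σ : ℕ → Tm) (ξ : ℕ → ℕ) : ∀ t : Tm,
    lsubT σ (renLT ξ t) = lsubT (fun k => σ (ξ k)) t
  | .var x => rfl
  | .abs t => by simp [renLT, lsubT, lsubT_ren (upsL σ) (upr ξ) t, upsL_upr]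
  | .app t u => by simp [renLT, lsubT, lsubT_ren σ ξ t, lsubT_ren σ ξ u]
  | .mabs c => by simp [renLT, lsubT, lsubC_ren (fun k => renMT Nat.succ (σ k)) ξ c]
theorem lsubC_ren (σ : ℕ → Tm) (ξ : ℕ → ℕ) : ∀ c : Cm,
    lsubC σ (renLC ξ c) = lsubC (fun k => σ (ξ k)) c
  | .cmd a t => by simp [renLC, lsubC, lsubT_ren σ ξ t]
end

mutual
theorem lsubT_id (σ : ℕ → Tm) (h : ∀ k, σ k = .var k) : ∀ t : Tm, lsubT σ t = t
  | .var x => h x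
  | .abs t => by
      simp only [lsubT]
      rw [lsubT_id (upsL σ) (fun k => by cases k <;> simp [upsL, h, renLT]) t]
  | .app t u => by simp [lsubT, lsubT_id σ h t, lsubT_id σ h u]
  | .mabs c => by
      simp only [lsubT]
      rw [lsubC_id _ (fun k => by simp [h, renMT]) c]
theorem lsubC_id (σ : ℕ → Tm) (h : ∀ k, σ k = .var k) : ∀ c : Cm, lsubC σ c = c
  | .cmd a t => by simp [lsubC, lsubT_id σ h t]
end

theorem upsM_upr (σ : ℕ → Ct) (ξ : ℕ → ℕ) :
    (fun k => upsM σ (upr ξ k)) = upsM (fun k => σ (ξ k)) := by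
  funext n; cases n <;> simp [upsM, upr]

mutual
theorem msubT_ren (σ : ℕ → Ct) (ξ : ℕ → ℕ) : ∀ t : Tm,
    msubT σ (renMT ξ t) = msubT (fun k => σ (ξ k)) t
  | .var x => rfl
  | .abs t => by simp [renMT, msubT, msubT_ren (fun k => renLE Nat.succ (σ k)) ξ t]
  | .app t u => by simp [renMT, msubT, msubT_ren σ ξ t, msubT_ren σ ξ u]
  | .mabs c => by simp [renMT, msubT, msubC_ren (upsM σ) (upr ξ) c, upsM_upr]
theorem msubC_ren (σ : ℕ → Ct) (ξ : ℕ → ℕ) : ∀ c : Cm,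
    msubC σ (renMC ξ c) = msubC (fun k => σ (ξ k)) c
  | .cmd a t => by simp [renMC, msubC, msubT_ren σ ξ t]
end

mutual
theorem msubT_id (σ : ℕ → Ct) (h : ∀ k, σ k = .cvar k) : ∀ t : Tm, msubT σ t = t
  | .var x => rfl
  | .abs t => by
      simp only [msubT]
      rw [msubT_id _ (fun k => by simp [h, renLE]) t]
  | .app t u => by simp [msubT, msubT_id σ h t, msubT_id σ h u]
  | .mabs c => by
      simp only [msubT]
      rw [msubC_id (upsM σ) (fun k => by cases k <;> simp [upsM, h, renME]) c]
theorem msubC_id (σ : ℕ → Ct) (h : ∀ k, σ k = .cvar k) : ∀ c : Cm, msubC σ c = c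
  | .cmd a t => by simp [msubC, msubT_id σ h t, h, fill]
end

mutual
theorem cntLT_renM (x : ℕ) (ξ : ℕ → ℕ) : ∀ t : Tm, cntLT x (renMT ξ t) = cntLT x t
  | .var y => rfl
  | .abs t => by simp [renMT, cntLT, cntLT_renM (x+1) ξ t]
  | .app t u => by simp [renMT, cntLT, cntLT_renM x ξ t, cntLT_renM x ξ u]
  | .mabs c => by simp [renMT, cntLT, cntLC_renM x (upr ξ) c]
theorem cntLC_renM (x : ℕ) (ξ : ℕ → ℕ) : ∀ c : Cm, cntLC x (renMC ξ c) = cntLC x c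
  | .cmd a t => by simp [renMC, cntLC, cntLT_renM x ξ t]
end

mutual
theorem cntLT_renL (x : ℕ) (ξ : ℕ → ℕ) (h : ∀ y, ξ y ≠ x) :
    ∀ t : Tm, cntLT x (renLT ξ t) = 0
  | .var y => by simp [renLT, cntLT, h y]
  | .abs t => by
      simp only [renLT, cntLT]
      exact cntLT_renL (x+1) (upr ξ) (fun y => by cases y <;> simp [upr, h]) t
  | .app t u => by simp [renLT, cntLT, cntLT_renL x ξ h t, cntLT_renL x ξ h u]
  | .mabs c => by simp [renLT, cntLT, cntLC_renL x ξ h c]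
theorem cntLC_renL (x : ℕ) (ξ : ℕ → ℕ) (h : ∀ y, ξ y ≠ x) :
    ∀ c : Cm, cntLC x (renLC ξ c) = 0
  | .cmd a t => by simp [renLC, cntLC, cntLT_renL x ξ h t]
end

mutual
theorem dag_commT : ∀ (t : Tm) (ξ ζ : ℕ → ℕ),
    circT (brenLT ζ (brenMT ξ (dagT t))) = renLT ζ (renMT ξ (circT (dagT t)))
  | .var x, ξ, ζ => rfl
  | .abs t, ξ, ζ => by
      simp [dagT, circT, brenMT, brenLT, renMT, renLT, dag_commT t ξ (upr ζ)]
  | .mabs c, ξ, ζ => by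
      simp [dagT, circT, brenMT, brenLT, renMT, renLT, dag_commC c (upr ξ) ζ]
  | .app u v, ξ, ζ => by
      have hv : circT (brenMT Nat.succ (dagT v)) = renMT Nat.succ (circT (dagT v)) := by
        have h := dag_commT v Nat.succ (fun k => k)
        rwa [brenLT_id, renLT_id] at h
      have hu : circT (brenLT Nat.succ (brenMT Nat.succ (dagT u)))
          = renLT Nat.succ (renMT Nat.succ (circT (dagT u))) := dag_commT u _ _
      simp only [dagT, circT, circC, circE, fill, brenMT, brenLT, brenMC, brenLC,
        brenME, brenLE]
      simp [brenMT_brenLT, brenMT_comp, brenLT_comp, renMT_renLT, renMT_comp,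
        renLT_comp, renMC_comp, renLC_comp, renMC_renLC, upr, dag_commT u,
        dag_commT v, hv, hu, renMT, renLT, renMC, renLC, circT, circC, circE, fill]
theorem dag_commC : ∀ (c : Cm) (ξ ζ : ℕ → ℕ),
    circC (brenLC ζ (brenMC ξ (dagC c))) = renLC ζ (renMC ξ (circC (dagC c)))
  | .cmd a t, ξ, ζ => by
      simp [dagC, circC, circE, fill, brenMC, brenLC, brenME, brenLE, renLC, renMC,
        dag_commT t ξ ζ]
end

theorem dag_commM (t : Tm) (ξ : ℕ → ℕ) :
    circT (brenMT ξ (dagT t)) = renMT ξ (circT (dagT t)) := by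
  have h := dag_commT t ξ (fun k => k)
  rwa [brenLT_id, renLT_id] at h

theorem dag_commL (t : Tm) (ζ : ℕ → ℕ) :
    circT (brenLT ζ (dagT t)) = renLT ζ (circT (dagT t)) := by
  have h := dag_commT t (fun k => k) ζ
  rwa [brenMT_id, renMT_id] at h

theorem star_abs {t t' : Tm} (h : Star LStepT t t') :
    Star LStepT (.abs t) (.abs t') :=
  Relation.ReflTransGen.lift Tm.abs (fun _ _ s => KT.absC s) _ _ h

theorem star_appL (u : Tm) {t t' : Tm} (h : Star LStepT t t') :
    Star LStepT (.app t u) (.app t' u) :=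
  Relation.ReflTransGen.lift (fun t => Tm.app t u) (fun _ _ s => KT.appL u s) _ _ h

theorem star_appR (t : Tm) {u u' : Tm} (h : Star LStepT u u') :
    Star LStepT (.app t u) (.app t u') :=
  Relation.ReflTransGen.lift (fun u => Tm.app t u) (fun _ _ s => KT.appR t s) _ _ h

theorem star_mabs {c c' : Cm} (h : Star LStepC c c') :
    Star LStepT (.mabs c) (.mabs c') :=
  Relation.ReflTransGen.lift Tm.mabs (fun _ _ s => KT.mabsC s) _ _ h

theorem star_cmd (a : ℕ) {t t' : Tm} (h : Star LStepT t t') :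
    Star LStepC (.cmd a t) (.cmd a t') :=
  Relation.ReflTransGen.lift (fun t => Cm.cmd a t) (fun _ _ s => KC.cmdC a s) _ _ h

theorem star_fill : ∀ (e : Ct) {t t' : Tm}, Star LStepT t t' →
    Star LStepC (fill e t) (fill e t')
  | .cvar a, _, _, s => star_cmd a s
  | .push b u, _, _, s => star_cmd b (star_appR u s)
  | .cons e u, _, _, s => star_fill e (star_appL u s)

theorem beta_aux (b : ℕ) (W A : Tm) :
    lsubT (sub0L A) (.mabs (.cmd b (.app (renLT Nat.succ W) (.var 0))))
      = .mabs (.cmd b (.app W (renMT Nat.succ A))) := by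
  simp only [lsubT, lsubC, lsubT_ren, sub0L]
  rw [lsubT_id _ (fun k => by simp [sub0L, renMT]) W]

theorem cnt_aux (b : ℕ) (W : Tm) :
    cntLT 0 (Tm.mabs (.cmd b (.app (renLT Nat.succ W) (.var 0)))) = 1 := by
  simp [cntLT, cntLC, cntLT_renL 0 Nat.succ (fun y => Nat.succ_ne_zero y) W]

theorem rho_aux1 (Z : Tm) : msubT (sub0M (Ct.cvar 0)) (renMT Nat.succ Z) = Z := by
  rw [msubT_ren]
  exact msubT_id _ (fun k => by simp [sub0M]) Z

mutual
theorem mainT : ∀ t : Tm, Star LStepT (circT (dagT t)) t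
  | .var x => .refl
  | .abs t => by
      simp only [dagT, circT]
      exact star_abs (mainT t)
  | .mabs c => by
      simp only [dagT, circT]
      exact star_mabs (mainC c)
  | .app u v => by
      have hu : circT (brenLT Nat.succ (brenMT Nat.succ (dagT u)))
          = renLT Nat.succ (renMT Nat.succ (circT (dagT u))) := dag_commT u _ _
      have hv := dag_commM v Nat.succ
      simp only [dagT, circT, circC, circE, fill, hu, hv, renMC, renMT, renMT_renLT]
      refine Relation.ReflTransGen.head
        (KT.mabsC (KC.cmdC 0 (KT.root (RootTlin.beta _ _ (Or.inr (cnt_aux _ _)))))) ?_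
      rw [beta_aux]
      refine Relation.ReflTransGen.head
        (KT.mabsC (KC.root (RootC.rho 0 _))) ?_
      simp only [msubC, msubT, sub0M, fill, rho_aux1]
      have hr : Tm.app (renMT Nat.succ (circT (dagT u))) (renMT Nat.succ (circT (dagT v)))
          = renMT Nat.succ (.app (circT (dagT u)) (circT (dagT v))) := by simp [renMT]
      rw [hr]
      refine Relation.ReflTransGen.head (KT.root (RootTlin.theta _)) ?_
      exact (star_appL _ (mainT u)).trans (star_appR _ (mainT v))
theorem mainC : ∀ c : Cm, Star LStepC (circC (dagC c)) c
  | .cmd a t => by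
      simp only [dagC, circC, circE, fill]
      exact star_cmd a (mainT t)
end

theorem mainE : ∀ (e : Ct) (u : Tm), Star LStepC (fill (circE (dagE e)) u) (fill e u)
  | .cvar a, u => .refl
  | .push b t, u => by
      have ht := dag_commL t Nat.succ
      simp only [dagE, circE, circC, fill, ht, renMC, renMT, renMT_renLT, circT]
      refine Relation.ReflTransGen.head
        (KC.cmdC 0 (KT.root (RootTlin.beta _ _ (Or.inr (cnt_aux _ _))))) ?_
      rw [beta_aux]
      refine Relation.ReflTransGen.head (KC.root (RootC.rho 0 _)) ?_
      simp only [msubC, msubT, sub0M, fill, rho_aux1]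
      exact star_cmd b (star_appL u (mainT t))
  | .cons e t, u => by
      simp only [dagE, circE, fill]
      exact (star_fill _ (star_appR u (mainT t))).trans (mainE e (.app u t))

/-- for every λμ-term `t`, `(t†)∘` reduces to `t` by zero or more
linear λμ-reduction steps, and analogously for λμ-commands and λμ-contexts
(a λμ-context reduces to another one when all its fillings do). -/
theorem dag_circ_composition :
    (∀ t : Tm, Star LStepT (circT (dagT t)) t) ∧
    (∀ c : Cm, Star LStepC (circC (dagC c)) c) ∧
    (∀ (e : Ct) (u : Tm), Star LStepC (fill (circE (dagE e)) u) (fill e u)) :=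
  ⟨mainT, mainC, mainE⟩

end CHSim
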